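/- Let 0 < θ < ε ≤ 1 and let k, N be integers with k ≥ 2 and N ≥ ⌈k(k-1)/(2(ε^k - θ^k))⌉. If (A_i)_{i=1}^N is a family of measurable events in a probability space (Ω, Σ, μ) with μ(A_i) ≥ ε for all i ∈ [N], then there exists a subset F of [N] of cardinality k such that μ(⋂_{i∈F} A_i) ≥ θ^k. -/

import Mathlib

open MeasureTheory Finset


lemma aux_pow_le (n : ℕ) : ∀ k : ℕ, (n:ℝ)^k ≤ (n.descFactorial k : ℝ) + (k:ℝ)*((k:ℝ)-1)/2 * (n:ℝ)^(k-1)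
  | 0 => by norm_num
  | 1 => by norm_num
  | (m+2) => by
    have ih := aux_pow_le n (m+1)
    simp only [Nat.add_sub_cancel] at ih
    have hD : (n.descFactorial (m+1) : ℝ) ≤ (n:ℝ)^(m+1) := by
      exact_mod_cast Nat.cast_le.2 (Nat.descFactorial_le_pow n (m+1))
    have hDnn : (0:ℝ) ≤ (n.descFactorial (m+1) : ℝ) := Nat.cast_nonneg _
    have hD2nn : (0:ℝ) ≤ (n.descFactorial (m+2) : ℝ) := Nat.cast_nonneg _
    have key : (n:ℝ) * (n.descFactorial (m+1) : ℝ) ≤ (n.descFactorial (m+2) : ℝ) + ((m:ℝ)+1) * (n:ℝ)^(m+1) := by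
      rcases le_or_gt (m+1) n with h | h
      · have hrec : n.descFactorial (m+2) = (n - (m+1)) * n.descFactorial (m+1) := Nat.descFactorial_succ n (m+1)
        have hmul : (n.descFactorial (m+2) : ℝ) = ((n:ℝ) - ((m:ℝ)+1)) * (n.descFactorial (m+1) : ℝ) := by
          rw [hrec]
          push_cast [Nat.cast_sub h]
          ring
        nlinarith [hD, hDnn]
      · have h0 : n.descFactorial (m+1) = 0 := Nat.descFactorial_eq_zero_iff_lt.2 h
        rw [h0]
        simp
        positivity
    have hn : (0:ℝ) ≤ n := Nat.cast_nonneg n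
    have step1 : (n:ℝ)^(m+2) ≤ (n:ℝ) * ((n.descFactorial (m+1):ℝ) + (((m:ℝ)+1))*(((m:ℝ)+1)-1)/2 * (n:ℝ)^m) := by
      have h2 := mul_le_mul_of_nonneg_left ih hn
      calc (n:ℝ)^(m+2) = (n:ℝ) * (n:ℝ)^(m+1) := by ring
        _ ≤ _ := by
            convert h2 using 3
            · rfl
            push_cast
            ring
    have hexpand : (n:ℝ) * ((n.descFactorial (m+1):ℝ) + (((m:ℝ)+1))*(((m:ℝ)+1)-1)/2 * (n:ℝ)^m)
        = (n:ℝ) * (n.descFactorial (m+1):ℝ) + ((m:ℝ)+1)*(m:ℝ)/2 * (n:ℝ)^(m+1) := by ring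
    have hsub : ((m+2) - 1 : ℕ) = m + 1 := rfl
    rw [hsub]
    push_cast
    push_cast at step1 hexpand key
    nlinarith [key, step1, hexpand]



section
variable {Ω : Type*} [MeasurableSpace Ω] (μ : Measure Ω) [IsProbabilityMeasure μ]
variable {N : ℕ} (A : Fin N → Set Ω) (hmeas : ∀ i, MeasurableSet (A i))

open Classical in
noncomputable def atomF (t : Finset (Fin N)) : Set Ω := ⋂ i, if i ∈ t then A i else (A i)ᶜ

open Classical in
noncomputable def typF (ω : Ω) : Finset (Fin N) := univ.filter (fun i => ω ∈ A i)

open Classical in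
lemma mem_atomF {t : Finset (Fin N)} {ω : Ω} : ω ∈ atomF A t ↔ ∀ i, (ω ∈ A i ↔ i ∈ t) := by
  simp only [atomF, Set.mem_iInter]
  constructor
  · intro h i
    have := h i
    by_cases hi : i ∈ t <;> simp [hi] at this ⊢ <;> tauto
  · intro h i
    by_cases hi : i ∈ t <;> simp [hi, h i]

open Classical in
lemma mem_atomF' {t : Finset (Fin N)} {ω : Ω} : ω ∈ atomF A t ↔ t = typF A ω := by
  rw [mem_atomF]
  constructor
  · intro h; ext i; simp [typF, ← h i]
  · intro h; subst h; intro i; simp [typF]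

lemma meas_atomF (hmeas : ∀ i, MeasurableSet (A i)) (t : Finset (Fin N)) : MeasurableSet (atomF A t) := by
  apply MeasurableSet.iInter
  intro i
  split_ifs
  exacts [hmeas i, (hmeas i).compl]

open Classical in
lemma hcapF (hmeas : ∀ i, MeasurableSet (A i)) (F : Finset (Fin N)) :
    (μ (⋂ i ∈ F, A i)).toReal = ∑ t ∈ univ.filter (fun t : Finset (Fin N) => F ⊆ t), (μ (atomF A t)).toReal := by
  have hset : (⋂ i ∈ F, A i) = ⋃ t ∈ univ.filter (fun t : Finset (Fin N) => F ⊆ t), atomF A t := by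
    ext ω
    simp only [Set.mem_iInter, Set.mem_iUnion, mem_filter, mem_univ, true_and]
    constructor
    · intro h
      refine ⟨typF A ω, ?_, (mem_atomF' A).2 rfl⟩
      intro i hi
      simp [typF, h i hi]
    · rintro ⟨t, hFt, hω⟩ i hi
      rw [mem_atomF] at hω
      exact (hω i).2 (hFt hi)
  rw [hset, measure_biUnion_finset ?_ (fun t _ => meas_atomF A hmeas t)]
  · exact ENNReal.toReal_sum (fun t _ => measure_ne_top μ _)
  · intro t _ t' _ htt'
    refine Set.disjoint_left.2 fun ω h1 h2 => htt' ?_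
    rw [mem_atomF'] at h1 h2
    rw [h1, h2]

end


theorem stmt_0 {Ω : Type*} [MeasurableSpace Ω] (μ : Measure Ω) [IsProbabilityMeasure μ]
    (θ ε : ℝ) (hθ : 0 < θ) (hθε : θ < ε) (hε : ε ≤ 1)
    (k N : ℕ) (hk : 2 ≤ k)
    (hN : ⌈((k : ℝ) * (k - 1)) / (2 * (ε ^ k - θ ^ k))⌉₊ ≤ N)
    (A : Fin N → Set Ω) (hmeas : ∀ i, MeasurableSet (A i))
    (hA : ∀ i, ε ≤ (μ (A i)).toReal) :
    ∃ F : Finset (Fin N), F.card = k ∧ θ ^ k ≤ (μ (⋂ i ∈ F, A i)).toReal := by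
  classical
  by_contra hcon
  push_neg at hcon
  have hkR : (2:ℝ) ≤ (k:ℝ) := by exact_mod_cast hk
  have hδ : 0 < ε ^ k - θ ^ k := by
    have := pow_lt_pow_left₀ hθε hθ.le (by omega : k ≠ 0)
    linarith
  have hεk1 : ε ^ k ≤ 1 := pow_le_one₀ (by linarith) hε
  have hδ1 : ε ^ k - θ ^ k < 1 := by nlinarith [pow_pos hθ k]
  -- N ≥ k
  have hk1 : ((k:ℝ) - 1) < (k:ℝ) * ((k:ℝ) - 1) / (2 * (ε ^ k - θ ^ k)) := by
    rw [lt_div_iff₀ (by positivity)]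
    nlinarith
  have hNk : k ≤ N := by
    have h2 : ((k - 1 : ℕ) : ℝ) < (k:ℝ) * ((k:ℝ) - 1) / (2 * (ε ^ k - θ ^ k)) := by
      rw [Nat.cast_sub (by omega)]
      simpa using hk1
    have := Nat.lt_ceil.2 h2
    omega
  have hNpos : 0 < N := by omega
  -- real-valued ratio bound
  have hNq : (k:ℝ) * ((k:ℝ) - 1) / (2 * (ε ^ k - θ ^ k)) ≤ (N:ℝ) :=
    le_trans (Nat.le_ceil _) (Nat.cast_le.2 hN)
  -- atoms
  set w : Finset (Fin N) → ℝ := fun t => (μ (atomF A t)).toReal with hw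
  have hw_nonneg : ∀ t, 0 ≤ w t := fun t => ENNReal.toReal_nonneg
  have hcap : ∀ F : Finset (Fin N), (μ (⋂ i ∈ F, A i)).toReal
      = ∑ t ∈ univ.filter (fun t : Finset (Fin N) => F ⊆ t), w t := fun F => hcapF μ A hmeas F
  have hw1 : ∑ t : Finset (Fin N), w t = 1 := by
    have h0 := hcap ∅
    rw [show (⋂ i ∈ (∅ : Finset (Fin N)), A i) = Set.univ by simp] at h0
    rw [show (univ.filter (fun t : Finset (Fin N) => ∅ ⊆ t)) = univ by ext t; simp] at h0
    simpa using h0.symm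
  -- sum of w t * card t
  have hwA : ∀ i, (μ (A i)).toReal = ∑ t ∈ univ.filter (fun t : Finset (Fin N) => i ∈ t), w t := by
    intro i
    have := hcap {i}
    simpa [Finset.singleton_subset_iff] using this
  have hcardsum : ε * (N:ℝ) ≤ ∑ t : Finset (Fin N), w t * (t.card : ℝ) := by
    have h1 : ∑ i : Fin N, (μ (A i)).toReal = ∑ t : Finset (Fin N), w t * (t.card : ℝ) := by
      calc ∑ i : Fin N, (μ (A i)).toReal
          = ∑ i : Fin N, ∑ t : Finset (Fin N), if i ∈ t then w t else 0 := by
            simp_rw [hwA, Finset.sum_filter]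
        _ = ∑ t : Finset (Fin N), ∑ i : Fin N, if i ∈ t then w t else 0 := Finset.sum_comm
        _ = ∑ t : Finset (Fin N), w t * (t.card : ℝ) := by
            refine Finset.sum_congr rfl fun t _ => ?_
            rw [Finset.sum_ite_mem]
            simp [Finset.univ_inter, Finset.sum_const, mul_comm]
    have h2 : ε * (N:ℝ) ≤ ∑ i : Fin N, (μ (A i)).toReal := by
      calc ε * (N:ℝ) = ∑ _i : Fin N, ε := by simp [mul_comm]
        _ ≤ _ := Finset.sum_le_sum fun i _ => hA i
    linarith
  -- Jensen
  have hJ : (ε * (N:ℝ)) ^ k ≤ ∑ t : Finset (Fin N), w t * (t.card : ℝ) ^ k := by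
    have hjen := Real.pow_arith_mean_le_arith_mean_pow univ w (fun t => ((t.card : ℝ)))
      (fun t _ => hw_nonneg t) hw1 (fun t _ => Nat.cast_nonneg _) k
    refine le_trans (pow_le_pow_left₀ (mul_nonneg (by linarith) (Nat.cast_nonneg N)) hcardsum k) hjen
  -- counting
  have hinj_card : ((univ : Finset (Fin k → Fin N)).filter Function.Injective).card = N.descFactorial k := by
    rw [← Fintype.card_subtype]
    rw [Fintype.card_congr (Equiv.subtypeInjectiveEquivEmbedding (Fin k) (Fin N))]
    simp [Fintype.card_embedding_eq]
  have huniv_card : ((univ : Finset (Fin k → Fin N))).card = N ^ k := by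
    simp [Finset.card_univ]
  have hcount : ∀ t : Finset (Fin N),
      (t.card:ℝ)^k - (k:ℝ)*((k:ℝ)-1)/2 * (N:ℝ)^(k-1)
        ≤ (((Fintype.piFinset (fun _ : Fin k => t)).filter Function.Injective).card : ℝ) := by
    intro t
    have h1 := Finset.card_filter_add_card_filter_not
      (s := Fintype.piFinset (fun _ : Fin k => t)) (p := Function.Injective)
    have h2 : (Fintype.piFinset fun _ : Fin k => t).card = t.card ^ k := by
      simp [Fintype.card_piFinset]
    rw [h2] at h1
    have h3 : ((Fintype.piFinset fun _ : Fin k => t).filter (fun p => ¬ Function.Injective p)).card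
        ≤ ((univ : Finset (Fin k → Fin N)).filter (fun p => ¬ Function.Injective p)).card :=
      Finset.card_le_card (Finset.filter_subset_filter _ (Finset.subset_univ _))
    have h4 := Finset.card_filter_add_card_filter_not
      (s := (univ : Finset (Fin k → Fin N))) (p := Function.Injective)
    rw [huniv_card, hinj_card] at h4
    have haux := aux_pow_le N k
    have e1 : (((Fintype.piFinset fun _ : Fin k => t).filter Function.Injective).card : ℝ)
        + (((Fintype.piFinset fun _ : Fin k => t).filter (fun p => ¬Function.Injective p)).card : ℝ)
        = (t.card : ℝ)^k := by exact_mod_cast h1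
    have e2 : (N.descFactorial k : ℝ)
        + (((univ : Finset (Fin k → Fin N)).filter (fun p => ¬Function.Injective p)).card : ℝ)
        = (N:ℝ)^k := by exact_mod_cast h4
    have e3 : ((((Fintype.piFinset fun _ : Fin k => t).filter (fun p => ¬Function.Injective p)).card : ℕ) : ℝ)
        ≤ (((univ : Finset (Fin k → Fin N)).filter (fun p => ¬Function.Injective p)).card : ℝ) :=
      Nat.cast_le.2 h3
    linarith
  -- double counting
  set Inj : Finset (Fin k → Fin N) := univ.filter Function.Injective with hInjdef
  have hdouble : ∑ p ∈ Inj, (μ (⋂ i ∈ Finset.image p univ, A i)).toReal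
      = ∑ t : Finset (Fin N), w t * (((Fintype.piFinset fun _ : Fin k => t).filter Function.Injective).card : ℝ) := by
    calc ∑ p ∈ Inj, (μ (⋂ i ∈ Finset.image p univ, A i)).toReal
        = ∑ p ∈ Inj, ∑ t : Finset (Fin N), if Finset.image p univ ⊆ t then w t else 0 := by
          refine Finset.sum_congr rfl fun p _ => ?_
          rw [hcap, Finset.sum_filter]
      _ = ∑ t : Finset (Fin N), ∑ p ∈ Inj, if Finset.image p univ ⊆ t then w t else 0 := Finset.sum_comm
      _ = _ := by
          refine Finset.sum_congr rfl fun t _ => ?_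
          have hfe : Inj.filter (fun p => Finset.image p univ ⊆ t)
              = (Fintype.piFinset fun _ : Fin k => t).filter Function.Injective := by
            ext p
            simp only [hInjdef, Finset.mem_filter, Finset.mem_univ, true_and,
              Fintype.mem_piFinset, Finset.image_subset_iff]
            tauto
          rw [← Finset.sum_filter, hfe, Finset.sum_const, nsmul_eq_mul, mul_comm]
  -- arithmetic comparison
  have hNpow_nonneg : (0:ℝ) ≤ (N:ℝ)^(k-1) := by positivity
  have hDk : (k:ℝ)*((k:ℝ)-1)/2 * (N:ℝ)^(k-1) ≤ (ε^k - θ^k) * (N:ℝ)^k := by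
    have hNk1 : (N:ℝ)^k = (N:ℝ)^(k-1) * N := by
      rw [← pow_succ]
      congr 1
      omega
    have h5 : (k:ℝ)*((k:ℝ)-1) ≤ (N:ℝ) * (2 * (ε^k - θ^k)) := (div_le_iff₀ (by positivity)).1 hNq
    rw [hNk1]
    nlinarith [hNpow_nonneg]
  have hchain : θ^k * (N:ℝ)^k ≤ ∑ p ∈ Inj, (μ (⋂ i ∈ Finset.image p univ, A i)).toReal := by
    rw [hdouble]
    have s1 : ∑ t : Finset (Fin N), w t * ((t.card:ℝ)^k - (k:ℝ)*((k:ℝ)-1)/2 * (N:ℝ)^(k-1))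
        ≤ ∑ t : Finset (Fin N), w t * (((Fintype.piFinset fun _ : Fin k => t).filter Function.Injective).card : ℝ) :=
      Finset.sum_le_sum fun t _ => mul_le_mul_of_nonneg_left (hcount t) (hw_nonneg t)
    have s2 : ∑ t : Finset (Fin N), w t * ((t.card:ℝ)^k - (k:ℝ)*((k:ℝ)-1)/2 * (N:ℝ)^(k-1))
        = (∑ t : Finset (Fin N), w t * (t.card:ℝ)^k) - (k:ℝ)*((k:ℝ)-1)/2 * (N:ℝ)^(k-1) := by
      simp_rw [mul_sub]
      rw [Finset.sum_sub_distrib, ← Finset.sum_mul, hw1, one_mul]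
    have hmp : (ε * (N:ℝ))^k = ε^k * (N:ℝ)^k := mul_pow ε (N:ℝ) k
    have hexp : (ε^k - θ^k) * (N:ℝ)^k = ε^k * (N:ℝ)^k - θ^k * (N:ℝ)^k := by ring
    linarith [hJ, s1, s2, hDk]
  -- contradiction
  have hInj_ne : Inj.Nonempty := by
    refine ⟨Fin.castLE hNk, ?_⟩
    rw [hInjdef, Finset.mem_filter]
    exact ⟨Finset.mem_univ _, Fin.castLE_injective hNk⟩
  have hterm : ∀ p ∈ Inj, (μ (⋂ i ∈ Finset.image p univ, A i)).toReal < θ^k := by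
    intro p hp
    apply hcon
    rw [hInjdef, Finset.mem_filter] at hp
    rw [Finset.card_image_of_injective _ hp.2, Finset.card_univ, Fintype.card_fin]
  have hlt : ∑ p ∈ Inj, (μ (⋂ i ∈ Finset.image p univ, A i)).toReal < (Inj.card : ℝ) * θ^k := by
    have := Finset.sum_lt_sum_of_nonempty hInj_ne hterm
    simpa [Finset.sum_const, nsmul_eq_mul] using this
  have hcard : (Inj.card : ℝ) ≤ (N:ℝ)^k := by
    have h6 : Inj.card ≤ N ^ k := by
      rw [← huniv_card]
      exact Finset.card_filter_le _ _
    exact_mod_cast h6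
  have hθk : (0:ℝ) < θ^k := pow_pos hθ k
  nlinarith [hchain, hlt, hcard, hθk]
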